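/- arXiv:2605.23131 — 3 statements merged into one kernel-verified Lean document; each statement's English description precedes it below -/
import Mathlib

section
/- If A and B are symmetric positive definite matrices with B ⪯ A and det(A) ≤ α · det(B) for some α ≥ 1, then for every vector x, xᵀ B^{-1} x ≤ α · xᵀ A^{-1} x. -/
open Matrix

/-- If `B ⪯ A` are symmetric positive definite and `det A ≤ α · det B` with `α ≥ 1`,
then `xᵀ B⁻¹ x ≤ α · xᵀ A⁻¹ x` for every `x` (Lemma 12 of Abbasi-Yadkori et al. 2011). -/
theorem stmt_3 {d : ℕ} (A B : Matrix (Fin d) (Fin d) ℝ)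
    (hA : A.PosDef) (hB : B.PosDef) (hBA : (A - B).PosSemidef)
    (α : ℝ) (hα : 1 ≤ α) (hdet : A.det ≤ α * B.det) :
    ∀ x : Fin d → ℝ, x ⬝ᵥ (B⁻¹).mulVec x ≤ α * (x ⬝ᵥ (A⁻¹).mulVec x) := by
  have hαpos : (0:ℝ) < α := lt_of_lt_of_le one_pos hα
  open scoped MatrixOrder in
  set S := CFC.sqrt A with hSdef
  open scoped MatrixOrder in
  have hSherm : S.IsHermitian := (CFC.sqrt_nonneg A).posSemidef.1
  open scoped MatrixOrder in
  have hSS : S * S = A := CFC.sqrt_mul_sqrt_self A hA.posSemidef.nonneg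
  have hdetA : 0 < A.det := hA.det_pos
  have hdetB : 0 < B.det := hB.det_pos
  have hdetAS : A.det = S.det * S.det := by rw [← hSS, det_mul]
  have hdetS : IsUnit S.det := by
    rcases eq_or_ne S.det 0 with h | h
    · rw [h, mul_zero] at hdetAS; exact absurd hdetAS hdetA.ne'
    · exact isUnit_iff_ne_zero.mpr h
  set T := S⁻¹ with hTdef
  have hTherm : T.IsHermitian := hSherm.inv
  have hST : S * T = 1 := mul_nonsing_inv S hdetS
  have hTS : T * S = 1 := nonsing_inv_mul S hdetS
  have hTAT : T * A * T = 1 := by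
    rw [← hSS, ← mul_assoc, hTS, one_mul, hST]
  set N := T * B * T with hNdef
  have hNpsd : N.PosSemidef := by
    have := hB.posSemidef.mul_mul_conjTranspose_same T
    rwa [hTherm.eq] at this
  have hNh : N.IsHermitian := hNpsd.1
  have h1N : (1 - N).PosSemidef := by
    have := hBA.mul_mul_conjTranspose_same T
    rwa [hTherm.eq, mul_sub, sub_mul, hTAT] at this
  set μ : Fin d → ℝ := hNh.eigenvalues with hμdef
  have hdetN : N.det = B.det / A.det := by
    rw [hNdef, det_mul, det_mul, hTdef, det_nonsing_inv, Ring.inverse_eq_inv, hdetAS]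
    field_simp
  have hprod : N.det = ∏ i, μ i := by
    rw [hNh.det_eq_prod_eigenvalues]; norm_num; rfl
  -- each eigenvalue is ≤ 1
  have hμ1 : ∀ i, μ i ≤ 1 := by
    intro i
    set v : Fin d → ℝ := ⇑(hNh.eigenvectorBasis i) with hvdef
    have hvv : v ⬝ᵥ v = 1 := by
      have h1 : ‖hNh.eigenvectorBasis i‖ = 1 := hNh.eigenvectorBasis.orthonormal.1 i
      have h2 := real_inner_self_eq_norm_mul_norm (hNh.eigenvectorBasis i)
      rw [h1, mul_one] at h2
      rw [EuclideanSpace.inner_eq_star_dotProduct] at h2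
      simpa [WithLp.equiv] using h2
    have h0 := h1N.dotProduct_mulVec_nonneg v
    have hmv : N *ᵥ v = μ i • v := hNh.mulVec_eigenvectorBasis i
    rw [sub_mulVec, one_mulVec, dotProduct_sub, hmv, dotProduct_smul] at h0
    simp only [star_trivial, smul_eq_mul, hvv, mul_one] at h0
    linarith
  have hμ0 : ∀ i, 0 ≤ μ i := fun i => hNpsd.eigenvalues_nonneg i
  have hμα : ∀ i, α⁻¹ ≤ μ i := by
    intro i
    have h1 : α⁻¹ ≤ N.det := by
      rw [hdetN, le_div_iff₀ hdetA, inv_mul_le_iff₀ hαpos]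
      linarith
    have h2 : N.det ≤ μ i := by
      rw [hprod, ← Finset.mul_prod_erase Finset.univ μ (Finset.mem_univ i)]
      have hle1 : ∏ j ∈ Finset.univ.erase i, μ j ≤ 1 :=
        Finset.prod_le_one (fun j _ => hμ0 j) (fun j _ => hμ1 j)
      calc μ i * ∏ j ∈ Finset.univ.erase i, μ j ≤ μ i * 1 :=
            mul_le_mul_of_nonneg_left hle1 (hμ0 i)
        _ = μ i := mul_one _
    linarith
  have hμpos : ∀ i, 0 < μ i := fun i => lt_of_lt_of_le (inv_pos.mpr hαpos) (hμα i)
  have hμinv : ∀ i, (μ i)⁻¹ ≤ α := by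
    intro i
    calc (μ i)⁻¹ ≤ (α⁻¹)⁻¹ := by
          apply inv_anti₀ (inv_pos.mpr hαpos) (hμα i)
      _ = α := inv_inv α
  -- spectral decomposition of N
  set U : Matrix (Fin d) (Fin d) ℝ := (hNh.eigenvectorUnitary : Matrix (Fin d) (Fin d) ℝ) with hUdef
  have hUsU : U * star U = 1 := (Matrix.mem_unitaryGroup_iff).mp hNh.eigenvectorUnitary.2
  have hsUU : star U * U = 1 := (Matrix.mem_unitaryGroup_iff').mp hNh.eigenvectorUnitary.2
  have hcancel : ∀ X : Matrix (Fin d) (Fin d) ℝ, star U * (U * X) = X := by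
    intro X; rw [← mul_assoc, hsUU, one_mul]
  have hspec : N = U * diagonal μ * star U := hNh.spectral_theorem
  have hNinv : N⁻¹ = U * diagonal (fun i => (μ i)⁻¹) * star U := by
    apply inv_eq_left_inv
    rw [hspec]
    calc U * diagonal (fun i => (μ i)⁻¹) * star U * (U * diagonal μ * star U)
        = U * (diagonal (fun i => (μ i)⁻¹) * (star U * (U * (diagonal μ * star U)))) := by
          simp only [mul_assoc]
      _ = U * (diagonal (fun i => (μ i)⁻¹) * (diagonal μ * star U)) := by rw [hcancel]
      _ = U * ((diagonal (fun i => (μ i)⁻¹) * diagonal μ) * star U) := by rw [mul_assoc]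
      _ = 1 := by
          rw [diagonal_mul_diagonal]
          have h1 : (fun i => (μ i)⁻¹ * μ i) = fun _ => (1:ℝ) :=
            funext fun i => inv_mul_cancel₀ (hμpos i).ne'
          rw [h1, diagonal_one, one_mul, hUsU]
  have hPSDdiag : (diagonal (fun i => α - (μ i)⁻¹)).PosSemidef :=
    posSemidef_diagonal_iff.mpr fun i => sub_nonneg.mpr (hμinv i)
  have hP : (U * diagonal (fun i => α - (μ i)⁻¹) * star U).PosSemidef := by
    have := hPSDdiag.mul_mul_conjTranspose_same U
    rwa [← star_eq_conjTranspose] at this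
  have heq : U * diagonal (fun i => α - (μ i)⁻¹) * star U
      = α • (1 : Matrix (Fin d) (Fin d) ℝ) - N⁻¹ := by
    have hd : diagonal (fun i => α - (μ i)⁻¹)
        = α • (1 : Matrix (Fin d) (Fin d) ℝ) - diagonal (fun i => (μ i)⁻¹) := by
      rw [smul_one_eq_diagonal, diagonal_sub]
    rw [hd, mul_sub, sub_mul, hNinv, mul_smul_comm, mul_one, smul_mul_assoc, hUsU]
  have hAinv : A⁻¹ = T * T := by rw [← hSS, Matrix.mul_inv_rev]
  have hNinv2 : T * N⁻¹ * T = B⁻¹ := by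
    rw [hNdef, Matrix.mul_inv_rev, Matrix.mul_inv_rev, hTdef, nonsing_inv_nonsing_inv S hdetS,
      ← mul_assoc, ← mul_assoc, nonsing_inv_mul S hdetS, one_mul, mul_assoc,
      mul_nonsing_inv S hdetS, mul_one]
  have hQ : (α • A⁻¹ - B⁻¹ : Matrix (Fin d) (Fin d) ℝ)
      = T * (α • (1 : Matrix (Fin d) (Fin d) ℝ) - N⁻¹) * T := by
    rw [mul_sub, sub_mul, hNinv2, hAinv, mul_smul_comm, mul_one, smul_mul_assoc]
  have h3 : (α • (1 : Matrix (Fin d) (Fin d) ℝ) - N⁻¹).PosSemidef := heq ▸ hP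
  have hQpsd : (α • A⁻¹ - B⁻¹ : Matrix (Fin d) (Fin d) ℝ).PosSemidef := by
    have h4 := h3.mul_mul_conjTranspose_same T
    rwa [hTherm.eq, ← hQ] at h4
  intro x
  have h0 := hQpsd.dotProduct_mulVec_nonneg x
  rw [sub_mulVec, dotProduct_sub, smul_mulVec, dotProduct_smul] at h0
  simp only [star_trivial, smul_eq_mul] at h0
  linarith
end

section
/- Under the conditions V_a, V_b ⪰ λI symmetric, symmetric perturbations E_a, E_b of operator norm at most η, ρ := η/λ < 1, and writing g := λ_max(V_a^{-1/2} V_b V_a^{-1/2}) and g̃ := λ_max(Ṽ_a^{-1/2} Ṽ_b Ṽ_a^{-1/2}) where Ṽ = V + E, one has c_ρ^{-1} · g ≤ g̃ ≤ c_ρ · g, where c_ρ = (1+ρ)/(1−ρ). -/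
open Matrix

section OldSqrt

open scoped ComplexOrder

/-- The old Mathlib `Matrix.PosSemidef.sqrt` (removed upstream), with its original definition. -/
noncomputable def Matrix.PosSemidef.sqrt {n : Type*} [Fintype n] [DecidableEq n] {𝕜 : Type*} [RCLike 𝕜]
    {A : Matrix n n 𝕜} (hA : A.PosSemidef) : Matrix n n 𝕜 :=
  hA.1.eigenvectorUnitary.1 * diagonal ((↑) ∘ (√·) ∘ hA.1.eigenvalues) *
    (star hA.1.eigenvectorUnitary : Matrix n n 𝕜)

end OldSqrt

namespace Matrix.PosSemidef

lemma posSemidef_sqrt {n : Type*} [Fintype n] [DecidableEq n] {A : Matrix n n ℝ}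
    (hA : A.PosSemidef) : hA.sqrt.PosSemidef := by
  unfold Matrix.PosSemidef.sqrt
  have hD : (diagonal ((↑) ∘ (√·) ∘ hA.1.eigenvalues) : Matrix n n ℝ).PosSemidef :=
    posSemidef_diagonal_iff.mpr fun i => Real.sqrt_nonneg _
  have h := hD.mul_mul_conjTranspose_same (hA.1.eigenvectorUnitary : Matrix n n ℝ)
  rwa [← Matrix.star_eq_conjTranspose] at h

lemma sqrt_mul_self {n : Type*} [Fintype n] [DecidableEq n] {A : Matrix n n ℝ}
    (hA : A.PosSemidef) : hA.sqrt * hA.sqrt = A := by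
  unfold Matrix.PosSemidef.sqrt
  set U : Matrix n n ℝ := (hA.1.eigenvectorUnitary : Matrix n n ℝ) with hUdef
  have hU2 : star U * U = 1 := (Matrix.mem_unitaryGroup_iff').mp hA.1.eigenvectorUnitary.2
  have hspec : A = U * diagonal (RCLike.ofReal ∘ hA.1.eigenvalues) * star U := by
    have h := hA.1.spectral_theorem
    rw [Unitary.conjStarAlgAut_apply] at h
    exact h
  set D : Matrix n n ℝ := diagonal (RCLike.ofReal ∘ (fun x => √x) ∘ hA.1.eigenvalues)
  have hDD : D * D = diagonal (RCLike.ofReal ∘ hA.1.eigenvalues) := by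
    rw [diagonal_mul_diagonal]
    congr 1
    funext i
    simp [Real.mul_self_sqrt (hA.eigenvalues_nonneg i)]
  have h3 : U * D * star U * (U * D * star U) = U * D * (star U * U) * D * star U := by
    simp only [Matrix.mul_assoc]
  rw [h3, hU2, Matrix.mul_one, Matrix.mul_assoc U D D, hDD, ← hspec]

end Matrix.PosSemidef

namespace Stmt6Aux

variable {d : ℕ}

lemma psd_smul {c : ℝ} {M : Matrix (Fin d) (Fin d) ℝ} (hc : 0 ≤ c) (hM : M.PosSemidef) :
    (c • M).PosSemidef := by
  refine ⟨?_, fun x => ?_⟩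
  · show (c • M)ᴴ = c • M
    rw [conjTranspose_smul, hM.1.eq]
    simp
  · exact (hM.smul hc).2 x

lemma eig_le_iff {G : Matrix (Fin d) (Fin d) ℝ} (hGH : G.IsHermitian) (c : ℝ) :
    (∀ i, hGH.eigenvalues i ≤ c) ↔
      (c • (1 : Matrix (Fin d) (Fin d) ℝ) - G).PosSemidef := by
  set U : Matrix (Fin d) (Fin d) ℝ := (hGH.eigenvectorUnitary : Matrix (Fin d) (Fin d) ℝ)
    with hUdef
  have hU1 : U * star U = 1 := (Matrix.mem_unitaryGroup_iff).mp hGH.eigenvectorUnitary.2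
  have hU2 : star U * U = 1 := (Matrix.mem_unitaryGroup_iff').mp hGH.eigenvectorUnitary.2
  have hspec : G = U * diagonal hGH.eigenvalues * star U := by
    have h := hGH.spectral_theorem
    rwa [RCLike.ofReal_real_eq_id, Function.id_comp] at h
  have key : c • (1 : Matrix (Fin d) (Fin d) ℝ) - G
      = U * diagonal (fun i => c - hGH.eigenvalues i) * star U := by
    have h1 : diagonal (fun i => c - hGH.eigenvalues i)
        = c • (1 : Matrix (Fin d) (Fin d) ℝ) - diagonal hGH.eigenvalues := by
      rw [smul_one_eq_diagonal, ← diagonal_sub]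
    rw [h1, Matrix.mul_sub, Matrix.sub_mul, ← hspec]
    congr 1
    rw [mul_smul_comm, mul_one, smul_mul_assoc, hU1]
  constructor
  · intro h
    rw [key]
    have hD : (diagonal (fun i => c - hGH.eigenvalues i)).PosSemidef :=
      PosSemidef.diagonal fun i => sub_nonneg.2 (h i)
    have h2 := hD.mul_mul_conjTranspose_same U
    rwa [← Matrix.star_eq_conjTranspose] at h2
  · intro h i
    have h2 := h.mul_mul_conjTranspose_same (star U)
    have e : star U * (c • (1 : Matrix (Fin d) (Fin d) ℝ) - G) * (star U)ᴴ
        = diagonal (fun i => c - hGH.eigenvalues i) := by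
      rw [key, ← Matrix.star_eq_conjTranspose, star_star]
      have h3 : star U * (U * diagonal (fun i => c - hGH.eigenvalues i) * star U) * U
          = (star U * U) * diagonal (fun i => c - hGH.eigenvalues i) * (star U * U) := by
        simp only [Matrix.mul_assoc]
      rw [h3, hU2, one_mul, mul_one]
    rw [e] at h2
    have := posSemidef_diagonal_iff.mp h2 i
    linarith

lemma shift_iff {A B S : Matrix (Fin d) (Fin d) ℝ}
    (hSH : S.IsHermitian) (hSS : S * S = A) (hdet : IsUnit S.det) (c : ℝ) :
    (c • (1 : Matrix (Fin d) (Fin d) ℝ) - S⁻¹ * B * S⁻¹).PosSemidef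
      ↔ (c • A - B).PosSemidef := by
  have h1 : S * S⁻¹ = 1 := mul_nonsing_inv _ hdet
  have h2 : S⁻¹ * S = 1 := nonsing_inv_mul _ hdet
  have hSiH : (S⁻¹).IsHermitian := hSH.inv
  constructor
  · intro h
    have h3 := h.mul_mul_conjTranspose_same S
    have e : S * (c • (1 : Matrix (Fin d) (Fin d) ℝ) - S⁻¹ * B * S⁻¹) * Sᴴ = c • A - B := by
      rw [hSH.eq, Matrix.mul_sub, Matrix.sub_mul]
      congr 1
      · rw [mul_smul_comm, mul_one, smul_mul_assoc, hSS]
      · have h4 : S * (S⁻¹ * B * S⁻¹) * S = (S * S⁻¹) * B * (S⁻¹ * S) := by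
          simp only [Matrix.mul_assoc]
        rw [h4, h1, h2, one_mul, mul_one]
    rwa [e] at h3
  · intro h
    have h3 := h.mul_mul_conjTranspose_same S⁻¹
    have e : S⁻¹ * (c • A - B) * (S⁻¹)ᴴ
        = c • (1 : Matrix (Fin d) (Fin d) ℝ) - S⁻¹ * B * S⁻¹ := by
      rw [hSiH.eq, Matrix.mul_sub, Matrix.sub_mul]
      congr 1
      rw [mul_smul_comm, smul_mul_assoc, ← hSS]
      have h4 : S⁻¹ * (S * S) * S⁻¹ = (S⁻¹ * S) * (S * S⁻¹) := by
        simp only [Matrix.mul_assoc]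
      rw [h4, h1, h2, one_mul]
    rwa [e] at h3

end Stmt6Aux

open Stmt6Aux

/-- Two-sided comparison of `λ_max(V_a^{-1/2} V_b V_a^{-1/2})` between the private and
non-private matrices: `c_ρ⁻¹ · g ≤ g̃ ≤ c_ρ · g`. -/
theorem stmt_6 {d : ℕ} (Va Vb Ea Eb : Matrix (Fin d) (Fin d) ℝ)
    (hVa : Va.IsHermitian) (hVb : Vb.IsHermitian)
    (hEa : Ea.IsHermitian) (hEb : Eb.IsHermitian)
    (lam η : ℝ) (hlam : 0 < lam) (hη : 0 ≤ η)
    (hVal : (Va - lam • (1 : Matrix (Fin d) (Fin d) ℝ)).PosSemidef)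
    (hVbl : (Vb - lam • (1 : Matrix (Fin d) (Fin d) ℝ)).PosSemidef)
    (hEa1 : (η • (1 : Matrix (Fin d) (Fin d) ℝ) - Ea).PosSemidef)
    (hEa2 : (Ea + η • (1 : Matrix (Fin d) (Fin d) ℝ)).PosSemidef)
    (hEb1 : (η • (1 : Matrix (Fin d) (Fin d) ℝ) - Eb).PosSemidef)
    (hEb2 : (Eb + η • (1 : Matrix (Fin d) (Fin d) ℝ)).PosSemidef)
    (ρ cρ : ℝ) (hρ : ρ = η / lam) (hρ1 : ρ < 1) (hcρ : cρ = (1 + ρ) / (1 - ρ))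
    (hVaP : Va.PosSemidef) (htaP : (Va + Ea).PosSemidef)
    (G Gt : Matrix (Fin d) (Fin d) ℝ)
    (hG : G = (hVaP.sqrt)⁻¹ * Vb * (hVaP.sqrt)⁻¹)
    (hGt : Gt = (htaP.sqrt)⁻¹ * (Vb + Eb) * (htaP.sqrt)⁻¹)
    (hGH : G.IsHermitian) (hGtH : Gt.IsHermitian)
    (g gt : ℝ) (hg : g = ⨆ i, hGH.eigenvalues i) (hgt : gt = ⨆ i, hGtH.eigenvalues i) :
    cρ⁻¹ * g ≤ gt ∧ gt ≤ cρ * g := by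
  have hρ0 : 0 ≤ ρ := hρ ▸ div_nonneg hη hlam.le
  have h1ρ : 0 < 1 - ρ := by linarith
  have hcρ0 : 0 < cρ := by rw [hcρ]; positivity
  have hηρ : η = ρ * lam := by rw [hρ]; field_simp
  rcases Nat.eq_zero_or_pos d with hd | hd
  · subst hd
    have hg0 : g = 0 := by rw [hg]; exact Real.iSup_of_isEmpty _
    have hgt0 : gt = 0 := by rw [hgt]; exact Real.iSup_of_isEmpty _
    constructor <;> simp [hg0, hgt0]
  haveI : Nonempty (Fin d) := ⟨⟨0, hd⟩⟩
  -- positive definiteness facts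
  have hlam1 : (lam • (1 : Matrix (Fin d) (Fin d) ℝ)).PosDef := by
    rw [smul_one_eq_diagonal]
    exact posDef_diagonal_iff.mpr fun _ => hlam
  have hlamη1 : ((lam - η) • (1 : Matrix (Fin d) (Fin d) ℝ)).PosDef := by
    rw [smul_one_eq_diagonal]
    refine posDef_diagonal_iff.mpr fun _ => ?_
    nlinarith
  have hVaPD : Va.PosDef := by
    have h := Matrix.PosDef.posSemidef_add hVal hlam1
    rwa [sub_add_cancel] at h
  have htaPD : (Va + Ea).PosDef := by
    have e : Va + Ea = (Va - lam • 1)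
        + ((Ea + η • 1) + (lam - η) • (1 : Matrix (Fin d) (Fin d) ℝ)) := by module
    rw [e]
    exact Matrix.PosDef.posSemidef_add hVal (Matrix.PosDef.posSemidef_add hEa2 hlamη1)
  have hVbPSD : Vb.PosSemidef := by
    have e : Vb = (Vb - lam • 1) + lam • (1 : Matrix (Fin d) (Fin d) ℝ) := by module
    rw [e]; exact hVbl.add hlam1.posSemidef
  have htbPSD : (Vb + Eb).PosSemidef := by
    have e : Vb + Eb = (Vb - lam • 1)
        + ((Eb + η • 1) + (lam - η) • (1 : Matrix (Fin d) (Fin d) ℝ)) := by module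
    rw [e]
    exact hVbl.add (hEb2.add hlamη1.posSemidef)
  have hdetA : IsUnit (hVaP.sqrt).det := by
    have hs : hVaP.sqrt * hVaP.sqrt = Va := hVaP.sqrt_mul_self
    have hdet : (hVaP.sqrt).det * (hVaP.sqrt).det = Va.det := by rw [← det_mul, hs]
    refine isUnit_iff_ne_zero.mpr fun h => (ne_of_gt hVaPD.det_pos) ?_
    rw [← hdet, h, mul_zero]
  have hdetT : IsUnit (htaP.sqrt).det := by
    have hs : htaP.sqrt * htaP.sqrt = Va + Ea := htaP.sqrt_mul_self
    have hdet : (htaP.sqrt).det * (htaP.sqrt).det = (Va + Ea).det := by rw [← det_mul, hs]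
    refine isUnit_iff_ne_zero.mpr fun h => (ne_of_gt htaPD.det_pos) ?_
    rw [← hdet, h, mul_zero]
  -- PSD of G and Gt
  have hGpsd : G.PosSemidef := by
    rw [hG]
    have h := hVbPSD.mul_mul_conjTranspose_same (hVaP.sqrt)⁻¹
    rwa [(hVaP.posSemidef_sqrt.1.inv).eq] at h
  have hGtpsd : Gt.PosSemidef := by
    rw [hGt]
    have h := htbPSD.mul_mul_conjTranspose_same (htaP.sqrt)⁻¹
    rwa [(htaP.posSemidef_sqrt.1.inv).eq] at h
  -- sup bounds
  have hub : ∀ i, hGH.eigenvalues i ≤ g := by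
    intro i; rw [hg]
    exact le_ciSup (Set.Finite.bddAbove (Set.finite_range _)) i
  have hubt : ∀ i, hGtH.eigenvalues i ≤ gt := by
    intro i; rw [hgt]
    exact le_ciSup (Set.Finite.bddAbove (Set.finite_range _)) i
  have hg0 : 0 ≤ g := le_trans (hGpsd.eigenvalues_nonneg (Classical.arbitrary _))
    (hub (Classical.arbitrary _))
  have hgt0 : 0 ≤ gt := le_trans (hGtpsd.eigenvalues_nonneg (Classical.arbitrary _))
    (hubt (Classical.arbitrary _))
  -- matrix inequalities from eigenvalue bounds
  have hgle : (g • Va - Vb).PosSemidef := by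
    have h0 := (eig_le_iff hGH g).mp hub
    rw [hG] at h0
    exact (shift_iff hVaP.posSemidef_sqrt.1 hVaP.sqrt_mul_self hdetA g).mp h0
  have htle : (gt • (Va + Ea) - (Vb + Eb)).PosSemidef := by
    have h0 := (eig_le_iff hGtH gt).mp hubt
    rw [hGt] at h0
    exact (shift_iff htaP.posSemidef_sqrt.1 htaP.sqrt_mul_self hdetT gt).mp h0
  -- combination 1 : gt ≤ cρ * g
  have comb1 : ((cρ * g) • (Va + Ea) - (Vb + Eb)).PosSemidef := by
    have e : (cρ * g) • (Va + Ea) - (Vb + Eb)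
        = g • (cρ • ((Ea + η • 1) + ρ • (Va - lam • 1)))
          + ((1 + ρ) • (g • Va - Vb))
          + (ρ • (Vb - lam • 1) + (η • (1 : Matrix (Fin d) (Fin d) ℝ) - Eb)) := by
      rw [hcρ, hηρ]
      match_scalars <;> field_simp <;> ring
    rw [e]
    exact ((psd_smul hg0 (psd_smul hcρ0.le (hEa2.add (psd_smul hρ0 hVal)))).add
      (psd_smul (by linarith) hgle)).add ((psd_smul hρ0 hVbl).add hEb1)
  have final2 : gt ≤ cρ * g := by
    have h4 := (shift_iff htaP.posSemidef_sqrt.1 htaP.sqrt_mul_self hdetT (cρ * g)).mpr comb1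
    rw [← hGt] at h4
    have h5 := (eig_le_iff hGtH (cρ * g)).mpr h4
    rw [hgt]
    exact ciSup_le h5
  -- combination 2 : g ≤ cρ * gt
  have hinv0 : (0:ℝ) ≤ (1 - ρ)⁻¹ := inv_nonneg.mpr h1ρ.le
  have comb2 : ((cρ * gt) • Va - Vb).PosSemidef := by
    have e : (cρ * gt) • Va - Vb
        = gt • ((1 - ρ)⁻¹ • (ρ • (Va - lam • 1) + (η • 1 - Ea)))
          + (1 - ρ)⁻¹ • (gt • (Va + Ea) - (Vb + Eb))
          + (1 - ρ)⁻¹ • ((Eb + η • 1) + ρ • (Vb - lam • (1 : Matrix (Fin d) (Fin d) ℝ))) := by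
      rw [hcρ, hηρ]
      match_scalars <;> field_simp <;> ring
    rw [e]
    exact ((psd_smul hgt0 (psd_smul hinv0 ((psd_smul hρ0 hVal).add hEa1))).add
      (psd_smul hinv0 htle)).add (psd_smul hinv0 (hEb2.add (psd_smul hρ0 hVbl)))
  have final1 : cρ⁻¹ * g ≤ gt := by
    rw [inv_mul_le_iff₀ hcρ0]
    have h4 := (shift_iff hVaP.posSemidef_sqrt.1 hVaP.sqrt_mul_self hdetA (cρ * gt)).mpr comb2
    rw [← hG] at h4
    have h5 := (eig_le_iff hGH (cρ * gt)).mpr h4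
    rw [hg]
    exact ciSup_le h5
  exact ⟨final1, final2⟩
end

section
/- Let V_t = λI + Σ_{s=1}^{t} x_s x_sᵀ for vectors x_s with ‖x_s‖₂ ≤ L and λ > 0. If τ_1 < τ_2 < … < τ_m ≤ T are indices such that det(V_{τ_{k+1}})/det(V_{τ_k}) > γ for every k and some γ > 1, then m ≤ 1 + d·log(1 + T L²/(λ d))/log γ. -/
open Matrix

lemma aux_trace_eq_sum_eigs {d : ℕ} {A : Matrix (Fin d) (Fin d) ℝ} (hA : A.IsHermitian) :
    A.trace = ∑ i, hA.eigenvalues i := by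
  simpa using hA.trace_eq_sum_eigenvalues

lemma aux_pow_le_det {d : ℕ} {S : Matrix (Fin d) (Fin d) ℝ} (hS : S.PosSemidef) (c : ℝ)
    (hc : 0 ≤ c) : c ^ d ≤ (c • (1 : Matrix (Fin d) (Fin d) ℝ) + S).det := by
  have hH := hS.isHermitian
  set U : Matrix (Fin d) (Fin d) ℝ := (hH.eigenvectorUnitary : Matrix (Fin d) (Fin d) ℝ) with hUdef
  have hU : U * star U = 1 := (Matrix.mem_unitaryGroup_iff).mp (hH.eigenvectorUnitary).2
  have key : c • (1 : Matrix (Fin d) (Fin d) ℝ) + S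
      = U * (diagonal (fun i => c + hH.eigenvalues i)) * star U := by
    have h1 : diagonal (fun i => c + hH.eigenvalues i)
        = c • (1 : Matrix (Fin d) (Fin d) ℝ) + diagonal hH.eigenvalues := by
      rw [smul_one_eq_diagonal, ← diagonal_add]
    rw [h1, Matrix.mul_add, Matrix.add_mul]
    congr 1
    · rw [Matrix.mul_smul, Matrix.mul_one, Matrix.smul_mul, hU]
    · have := hH.spectral_theorem
      simpa [hUdef] using this
  rw [key, Matrix.det_mul, Matrix.det_mul, mul_comm, ← mul_assoc, ← Matrix.det_mul]
  have hU' : star U * U = 1 := (Matrix.mem_unitaryGroup_iff').mp (hH.eigenvectorUnitary).2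
  rw [hU', Matrix.det_one, one_mul, det_diagonal]
  calc c ^ d = ∏ _i : Fin d, c := by simp
    _ ≤ ∏ i, (c + hH.eigenvalues i) := by
        apply Finset.prod_le_prod (fun i _ => hc)
        intro i _
        linarith [hS.eigenvalues_nonneg i]

lemma aux_det_le_trace_pow {d : ℕ} (hd : 0 < d) {A : Matrix (Fin d) (Fin d) ℝ}
    (hA : A.PosSemidef) : A.det ≤ (A.trace / d) ^ d := by
  have hH := hA.isHermitian
  have hz : ∀ i ∈ Finset.univ, (0:ℝ) ≤ hH.eigenvalues i := fun i _ => hA.eigenvalues_nonneg i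
  have hgm := Real.geom_mean_le_arith_mean_weighted Finset.univ (fun _ => (d:ℝ)⁻¹)
      hH.eigenvalues (fun _ _ => by positivity)
      (by simp [Finset.card_univ]; field_simp) hz
  have hdet : A.det = ∏ i, hH.eigenvalues i := by
    simpa using hH.det_eq_prod_eigenvalues
  have htr : A.trace = ∑ i, hH.eigenvalues i := aux_trace_eq_sum_eigs hH
  have hrw : ∏ i, hH.eigenvalues i = (∏ i, hH.eigenvalues i ^ ((d:ℝ)⁻¹)) ^ d := by
    rw [← Finset.prod_pow]
    congr 1
    ext i
    rw [← Real.rpow_natCast (hH.eigenvalues i ^ ((d:ℝ)⁻¹)) d, ← Real.rpow_mul (hz i (by simp))]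
    rw [inv_mul_cancel₀ (by exact_mod_cast hd.ne'), Real.rpow_one]
  have hsum : ∑ i, (d:ℝ)⁻¹ * hH.eigenvalues i = A.trace / d := by
    rw [htr, ← Finset.mul_sum]
    ring
  rw [hdet, hrw, ← hsum]
  apply pow_le_pow_left₀ (Finset.prod_nonneg fun i _ => Real.rpow_nonneg (hz i (by simp)) _) hgm

lemma aux_psd_vecMulVec {d : ℕ} (v : Fin d → ℝ) : (vecMulVec v v).PosSemidef := by
  refine .of_dotProduct_mulVec_nonneg ?_ ?_
  · ext i j
    simp [conjTranspose_apply, vecMulVec_apply, mul_comm]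
  · intro y
    have hmv : vecMulVec v v *ᵥ y = (v ⬝ᵥ y) • v := by
      ext i
      simp [mulVec, vecMulVec_apply, dotProduct, Finset.mul_sum, mul_comm, mul_assoc,
        mul_left_comm]
    rw [hmv]
    simp only [star_trivial, dotProduct_smul, smul_eq_mul]
    rw [dotProduct_comm]
    exact mul_self_nonneg _

/-- Rare-switching count: if along update times the determinant grows by a factor `> γ`
each time, then the number of updates is at most `1 + d·log(1 + T L²/(λ d))/log γ`. -/
theorem stmt_11 {d T : ℕ} (hd : 0 < d) (x : ℕ → Fin d → ℝ) (L lam γ : ℝ)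
    (hlam : 0 < lam) (hγ : 1 < γ)
    (hx : ∀ s, Real.sqrt (x s ⬝ᵥ x s) ≤ L)
    (V : ℕ → Matrix (Fin d) (Fin d) ℝ)
    (hV : ∀ t, V t = lam • (1 : Matrix (Fin d) (Fin d) ℝ)
        + ∑ s ∈ Finset.range t, vecMulVec (x s) (x s))
    (m : ℕ) (τ : Fin m → ℕ) (hτmono : StrictMono τ) (hτT : ∀ k, τ k ≤ T)
    (hgrow : ∀ k : Fin m, ∀ hk : (k : ℕ) + 1 < m,
      γ * (V (τ k)).det < (V (τ ⟨(k : ℕ) + 1, hk⟩)).det) :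
    (m : ℝ) ≤ 1 + d * Real.log (1 + T * L ^ 2 / (lam * d)) / Real.log γ := by
  have hL : 0 ≤ L := le_trans (Real.sqrt_nonneg _) (hx 0)
  have hdR : (0:ℝ) < d := by exact_mod_cast hd
  have hb : (1:ℝ) ≤ 1 + T * L ^ 2 / (lam * d) := by
    have : (0:ℝ) ≤ T * L ^ 2 / (lam * d) := by positivity
    linarith
  have hlogb : 0 ≤ Real.log (1 + T * L ^ 2 / (lam * d)) := Real.log_nonneg hb
  have hlogγ : 0 < Real.log γ := Real.log_pos hγ
  rcases Nat.eq_zero_or_pos m with hm | hm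
  · subst hm
    simp only [Nat.cast_zero]
    positivity
  -- PSD of sums
  have hSpsd : ∀ t : ℕ, (∑ s ∈ Finset.range t, vecMulVec (x s) (x s)).PosSemidef := by
    intro t
    exact Finset.sum_induction _ _ (fun a b ha hb => ha.add hb) Matrix.PosSemidef.zero
      (fun s _ => aux_psd_vecMulVec (x s))
  -- lower bound on det V t
  have hlow : ∀ t, lam ^ d ≤ (V t).det := by
    intro t
    rw [hV t]
    exact aux_pow_le_det (hSpsd t) lam hlam.le
  -- trace bound
  have htrace : ∀ t, t ≤ T → (V t).trace ≤ lam * d + T * L ^ 2 := by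
    intro t ht
    rw [hV t]
    have h1 : (lam • (1 : Matrix (Fin d) (Fin d) ℝ)).trace = lam * d := by
      simp [trace_smul, trace_one, smul_eq_mul]
    rw [trace_add, h1, trace_sum]
    have h2 : ∀ s, (vecMulVec (x s) (x s)).trace = x s ⬝ᵥ x s := by
      intro s
      simp [Matrix.trace, Matrix.diag, vecMulVec_apply, dotProduct]
    have h3 : ∀ s, x s ⬝ᵥ x s ≤ L ^ 2 := by
      intro s
      have h4 : (0:ℝ) ≤ x s ⬝ᵥ x s := by
        simpa [dotProduct] using Finset.sum_nonneg fun i _ => mul_self_nonneg (x s i)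
      calc x s ⬝ᵥ x s = Real.sqrt (x s ⬝ᵥ x s) ^ 2 := (Real.sq_sqrt h4).symm
        _ ≤ L ^ 2 := by
            apply pow_le_pow_left₀ (Real.sqrt_nonneg _) (hx s)
    calc lam * d + ∑ s ∈ Finset.range t, (vecMulVec (x s) (x s)).trace
        ≤ lam * d + ∑ s ∈ Finset.range t, L ^ 2 := by
          gcongr with s hs
          rw [h2 s]; exact h3 s
      _ = lam * d + t * L ^ 2 := by rw [Finset.sum_const, Finset.card_range]; ring
      _ ≤ lam * d + T * L ^ 2 := by
          have : (t:ℝ) ≤ T := by exact_mod_cast ht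
          nlinarith [sq_nonneg L]
  -- upper bound on det
  have hVpsd : ∀ t, (V t).PosSemidef := by
    intro t
    rw [hV t]
    have h1 : (lam • (1 : Matrix (Fin d) (Fin d) ℝ)).PosSemidef := by
      rw [smul_one_eq_diagonal]
      exact Matrix.PosSemidef.diagonal (fun i => hlam.le)
    exact h1.add (hSpsd t)
  have hup : ∀ t, t ≤ T → (V t).det ≤ (lam + T * L ^ 2 / d) ^ d := by
    intro t ht
    have htrnn : 0 ≤ (V t).trace := by
      rw [aux_trace_eq_sum_eigs (hVpsd t).isHermitian]
      exact Finset.sum_nonneg fun i _ => (hVpsd t).eigenvalues_nonneg i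
    have h5 : (V t).trace / d ≤ lam + T * L ^ 2 / d := by
      rw [div_le_iff₀ hdR]
      calc (V t).trace ≤ lam * d + T * L ^ 2 := htrace t ht
        _ = (lam + T * L ^ 2 / d) * d := by field_simp
    calc (V t).det ≤ ((V t).trace / d) ^ d := aux_det_le_trace_pow hd (hVpsd t)
      _ ≤ (lam + T * L ^ 2 / d) ^ d := pow_le_pow_left₀ (by positivity) h5 d
  -- growth chain
  have hchain : ∀ k : ℕ, ∀ hk : k < m, lam ^ d * γ ^ k ≤ (V (τ ⟨k, hk⟩)).det := by
    intro k
    induction k with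
    | zero => intro hk; simpa using hlow (τ ⟨0, hk⟩)
    | succ n ih =>
      intro hk
      have hn : n < m := Nat.lt_of_succ_lt hk
      have := hgrow ⟨n, hn⟩ hk
      have hγ0 : (0:ℝ) < γ := lt_trans one_pos hγ
      calc lam ^ d * γ ^ (n + 1) = γ * (lam ^ d * γ ^ n) := by ring
        _ ≤ γ * (V (τ ⟨n, hn⟩)).det := by
            apply mul_le_mul_of_nonneg_left (ih hn) hγ0.le
        _ ≤ (V (τ ⟨n + 1, hk⟩)).det := le_of_lt this
  -- combine for k = m - 1
  have hm1 : m - 1 < m := Nat.sub_lt hm Nat.one_pos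
  have hkey : lam ^ d * γ ^ (m - 1) ≤ (lam + T * L ^ 2 / d) ^ d :=
    le_trans (hchain (m - 1) hm1) (hup _ (hτT ⟨m - 1, hm1⟩))
  -- take logs
  have hfact : lam + T * L ^ 2 / d = lam * (1 + T * L ^ 2 / (lam * d)) := by
    field_simp
  have hpos1 : (0:ℝ) < lam ^ d * γ ^ (m - 1) := by positivity
  have hγ0 : (0:ℝ) < γ := lt_trans one_pos hγ
  have hlog := Real.log_le_log hpos1 hkey
  rw [Real.log_mul (by positivity) (by positivity), Real.log_pow, Real.log_pow, hfact, Real.log_pow,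
    Real.log_mul hlam.ne' (by positivity), mul_add] at hlog
  have h6 : ((m:ℝ) - 1) * Real.log γ ≤ d * Real.log (1 + T * L ^ 2 / (lam * d)) := by
    have hcast : ((m - 1 : ℕ) : ℝ) = (m:ℝ) - 1 := by
      rw [Nat.cast_sub hm]; simp
    rw [← hcast]
    linarith
  have h7 : (m:ℝ) - 1 ≤ d * Real.log (1 + T * L ^ 2 / (lam * d)) / Real.log γ :=
    (le_div_iff₀ hlogγ).mpr h6
  linarith
end
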